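/- arXiv:1310.0965 — 2 statements merged into one kernel-verified Lean document; each statement's English description precedes it below -/
import Mathlib

section
/- Let f : ℝ → ℝ be twice continuously differentiable with liminf_{|s|→∞} f'(s) > 0 (i.e. there exist δ > 0 and R > 0 such that f'(s) ≥ δ whenever |s| ≥ R), and suppose there exist c_f > 0 and p ≥ 0 such that |f''(y)| ≤ c_f(1 + |y|^p) for all y ∈ ℝ. Let F(y) = ∫₀^y f(s) ds. Then for every M₀ ∈ ℝ there exist constants c₂ > 0, c₃ > 0 and c₄ > 0 such that (y − M₀) f(y) ≥ c₂ (y − M₀)² + c₃ F(y) − c₄ for all y ∈ ℝ. -/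
/-- Remark 2.1(2): under (H1)-(H3), for every `M₀` there are constants `c₂, c₃, c₄ > 0` with
`(y − M₀) f(y) ≥ c₂ (y − M₀)² + c₃ F(y) − c₄` for all `y`, where `F(y) = ∫₀^y f(s) ds`. -/
theorem remark_2_1_2 (f : ℝ → ℝ) (hf : ContDiff ℝ 2 f)
    (hdiss : ∃ δ > (0:ℝ), ∃ R > (0:ℝ), ∀ s : ℝ, R ≤ |s| → δ ≤ deriv f s)
    (c_f p : ℝ) (hcf : 0 < c_f) (hp : 0 ≤ p)
    (hgrowth : ∀ y : ℝ, |deriv (deriv f) y| ≤ c_f * (1 + |y| ^ p)) :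
    ∀ M₀ : ℝ, ∃ c₂ > (0:ℝ), ∃ c₃ > (0:ℝ), ∃ c₄ > (0:ℝ), ∀ y : ℝ,
      c₂ * (y - M₀) ^ 2 + c₃ * (∫ s in (0:ℝ)..y, f s) - c₄ ≤ (y - M₀) * f y := by
  obtain ⟨δ, hδ, R, hR, hdis⟩ := hdiss
  intro M₀
  have hfd : Differentiable ℝ f := hf.differentiable (by norm_num)
  have hfc : Continuous f := hfd.continuous
  -- the auxiliary function g(s) = f(s) - δ s, monotone outside [-R, R]
  set g : ℝ → ℝ := fun s => f s - δ * s with hgdef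
  have hgd : Differentiable ℝ g :=
    hfd.sub ((differentiable_const δ).mul differentiable_id)
  have hgderiv : ∀ x : ℝ, deriv g x = deriv f x - δ := by
    intro x
    have h1 : HasDerivAt (fun s : ℝ => δ * s) δ x := by
      simpa using (hasDerivAt_id x).const_mul δ
    exact ((hfd x).hasDerivAt.sub h1).deriv
  have hgmono1 : MonotoneOn g (Set.Ici R) := by
    apply monotoneOn_of_deriv_nonneg (convex_Ici R) hgd.continuous.continuousOn
      hgd.differentiableOn
    intro x hx
    rw [interior_Ici] at hx
    have hxR : R ≤ |x| := le_trans (le_of_lt hx) (le_abs_self x)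
    have := hdis x hxR
    rw [hgderiv x]
    linarith
  have hgmono2 : MonotoneOn g (Set.Iic (-R)) := by
    apply monotoneOn_of_deriv_nonneg (convex_Iic (-R)) hgd.continuous.continuousOn
      hgd.differentiableOn
    intro x hx
    rw [interior_Iic] at hx
    have hx' : x < -R := hx
    have hxR : R ≤ |x| := le_trans (show R ≤ -x by linarith) (neg_le_abs x)
    have := hdis x hxR
    rw [hgderiv x]
    linarith
  -- min and max of g on [-R, R]
  have hIcc : IsCompact (Set.Icc (-R) R) := isCompact_Icc
  have hne : (Set.Icc (-R) R).Nonempty := ⟨0, by constructor <;> linarith⟩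
  obtain ⟨xmin, hxminmem, hxmin⟩ := hIcc.exists_isMinOn hne hgd.continuous.continuousOn
  obtain ⟨xmax, hxmaxmem, hxmax⟩ := hIcc.exists_isMaxOn hne hgd.continuous.continuousOn
  have hmin : ∀ z ∈ Set.Icc (-R) R, g xmin ≤ g z := fun z hz => hxmin hz
  have hmax : ∀ z ∈ Set.Icc (-R) R, g z ≤ g xmax := fun z hz => hxmax hz
  set B : ℝ := g xmax - g xmin with hBdef
  have hBnn : 0 ≤ B := by
    have := hmin xmax hxmaxmem
    rw [hBdef]; linarith
  -- Lemma A : g increases up to an error B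
  have hA : ∀ a y : ℝ, a ≤ y → g a ≤ g y + B := by
    intro a y hay
    rcases lt_or_ge R a with h1 | h1
    · have := hgmono1 (Set.mem_Ici.mpr h1.le) (Set.mem_Ici.mpr (h1.le.trans hay)) hay
      linarith
    rcases lt_or_ge y (-R) with h2 | h2
    · have := hgmono2 (Set.mem_Iic.mpr (hay.trans h2.le)) (Set.mem_Iic.mpr h2.le) hay
      linarith
    have hga : g a ≤ g xmax := by
      rcases le_or_gt (-R) a with h3 | h3
      · exact hmax a ⟨h3, h1⟩
      · have h4 := hgmono2 (Set.mem_Iic.mpr h3.le) (Set.mem_Iic.mpr le_rfl) h3.le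
        have h5 : g (-R) ≤ g xmax := hmax (-R) ⟨le_rfl, by linarith⟩
        linarith
    have hgy : g xmin ≤ g y := by
      rcases le_or_gt y R with h3 | h3
      · exact hmin y ⟨h2, h3⟩
      · have h4 := hgmono1 (Set.mem_Ici.mpr le_rfl) (Set.mem_Ici.mpr h3.le) h3.le
        have h5 : g xmin ≤ g R := hmin R ⟨by linarith, le_rfl⟩
        linarith
    rw [hBdef]; linarith
  -- Step: quadratic lower bound for (y - M₀) f(y)
  set L : ℝ := B + |g M₀| + δ * |M₀| with hLdef
  have hLnn : 0 ≤ L := by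
    have h1 : (0:ℝ) ≤ |g M₀| := abs_nonneg _
    have h2 : (0:ℝ) ≤ δ * |M₀| := mul_nonneg hδ.le (abs_nonneg _)
    rw [hLdef]; linarith
  set C : ℝ := L ^ 2 / (2 * δ) with hCdef
  have hCnn : 0 ≤ C := div_nonneg (sq_nonneg _) (by linarith)
  have h3 : ∀ y : ℝ, δ / 2 * (y - M₀) ^ 2 - C ≤ (y - M₀) * f y := by
    intro y
    set t : ℝ := |y - M₀| with htdef
    have ht2 : t ^ 2 = (y - M₀) ^ 2 := sq_abs _
    have htnn : 0 ≤ t := abs_nonneg _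
    have e1 : (y - M₀) * f y = (y - M₀) * (g y - g M₀) + (y - M₀) * g M₀
        + δ * (y - M₀) ^ 2 + δ * M₀ * (y - M₀) := by
      simp only [hgdef]; ring
    have key : -(B * t) ≤ (y - M₀) * (g y - g M₀) := by
      rcases le_total M₀ y with h | h
      · have h1 := hA M₀ y h
        have habs : t = y - M₀ := abs_of_nonneg (by linarith)
        nlinarith [sub_nonneg.mpr h]
      · have h1 := hA y M₀ h
        have habs : t = -(y - M₀) := abs_of_nonpos (by linarith)
        nlinarith [sub_nonneg.mpr h]
    have h2 : -(|g M₀| * t) ≤ (y - M₀) * g M₀ := by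
      have ha := neg_abs_le ((y - M₀) * g M₀)
      have hb : |(y - M₀) * g M₀| = t * |g M₀| := abs_mul _ _
      nlinarith
    have h2' : -(δ * |M₀| * t) ≤ δ * M₀ * (y - M₀) := by
      have ha := neg_abs_le (δ * M₀ * (y - M₀))
      have hb : |δ * M₀ * (y - M₀)| = |δ * M₀| * t := abs_mul _ _
      have hc : |δ * M₀| = δ * |M₀| := by
        rw [abs_mul, abs_of_pos hδ]
      nlinarith
    have hAM : L * t ≤ δ / 2 * t ^ 2 + C := by
      have hq : 0 ≤ (δ * t - L) ^ 2 / (2 * δ) := div_nonneg (sq_nonneg _) (by linarith)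
      have he : δ / 2 * t ^ 2 + C - L * t = (δ * t - L) ^ 2 / (2 * δ) := by
        rw [hCdef]; field_simp; ring
      linarith
    have hsum : B * t + |g M₀| * t + δ * |M₀| * t = L * t := by
      rw [hLdef]; ring
    rw [ht2] at hAM
    linarith
  -- Step: F(y) ≤ (y - M₀) f(y) + K
  set R₀ : ℝ := max R |M₀| + 1 with hR₀def
  have hRR₀ : R ≤ R₀ := by
    have := le_max_left R |M₀|
    rw [hR₀def]; linarith
  have hMR₀ : |M₀| + 1 ≤ R₀ := by
    have := le_max_right R |M₀|
    rw [hR₀def]; linarith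
  have hR₀pos : 0 < R₀ := by linarith [abs_nonneg M₀]
  set G : ℝ → ℝ := fun y => (y - M₀) * f y - ∫ s in (0:ℝ)..y, f s with hGdef
  have hGderiv : ∀ y : ℝ, HasDerivAt G ((y - M₀) * deriv f y) y := by
    intro y
    have h1 : HasDerivAt (fun z : ℝ => (z - M₀) * f z)
        (1 * f y + (y - M₀) * deriv f y) y :=
      ((hasDerivAt_id y).sub_const M₀).mul (hfd y).hasDerivAt
    have h2 : HasDerivAt (fun z : ℝ => ∫ s in (0:ℝ)..z, f s) (f y) y :=
      intervalIntegral.integral_hasDerivAt_right (hfc.intervalIntegrable _ _)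
        (hfc.stronglyMeasurableAtFilter _ _) hfc.continuousAt
    have h3 := h1.sub h2
    convert h3 using 1
    · rfl
    · rfl
    · rfl
    · ring
  have hGdiff : Differentiable ℝ G := fun y => (hGderiv y).differentiableAt
  have hGd : ∀ y : ℝ, deriv G y = (y - M₀) * deriv f y := fun y => (hGderiv y).deriv
  have hGmono : MonotoneOn G (Set.Ici R₀) := by
    apply monotoneOn_of_deriv_nonneg (convex_Ici R₀) hGdiff.continuous.continuousOn
      hGdiff.differentiableOn
    intro x hx
    rw [interior_Ici] at hx
    have hx' : R₀ < x := hx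
    have hxR : R ≤ |x| := le_trans (show R ≤ x by linarith) (le_abs_self x)
    have h1 := hdis x hxR
    have h2 : 0 ≤ x - M₀ := by
      have := le_abs_self M₀
      linarith
    rw [hGd x]
    exact mul_nonneg h2 (by linarith)
  have hGanti : AntitoneOn G (Set.Iic (-R₀)) := by
    apply antitoneOn_of_deriv_nonpos (convex_Iic (-R₀)) hGdiff.continuous.continuousOn
      hGdiff.differentiableOn
    intro x hx
    rw [interior_Iic] at hx
    have hx' : x < -R₀ := hx
    have hxR : R ≤ |x| := le_trans (show R ≤ -x by linarith) (neg_le_abs x)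
    have h1 := hdis x hxR
    have h2 : x - M₀ ≤ 0 := by
      have := neg_abs_le M₀
      linarith
    rw [hGd x]
    exact mul_nonpos_of_nonpos_of_nonneg h2 (by linarith)
  have hIcc₀ : IsCompact (Set.Icc (-R₀) R₀) := isCompact_Icc
  have hne₀ : (Set.Icc (-R₀) R₀).Nonempty := ⟨0, by constructor <;> linarith⟩
  obtain ⟨x₀, hx₀mem, hx₀⟩ := hIcc₀.exists_isMinOn hne₀ hGdiff.continuous.continuousOn
  have hGlb : ∀ y : ℝ, G x₀ ≤ G y := by
    intro y
    rcases le_total y (-R₀) with h | h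
    · have h1 : G (-R₀) ≤ G y := hGanti (Set.mem_Iic.mpr h) (Set.mem_Iic.mpr le_rfl) h
      have h2 : G x₀ ≤ G (-R₀) := hx₀ ⟨le_rfl, by linarith⟩
      linarith
    rcases le_total R₀ y with h' | h'
    · have h1 : G R₀ ≤ G y := hGmono (Set.mem_Ici.mpr le_rfl) (Set.mem_Ici.mpr h') h'
      have h2 : G x₀ ≤ G R₀ := hx₀ ⟨by linarith, le_rfl⟩
      linarith
    · exact hx₀ ⟨h, h'⟩
  set K : ℝ := |G x₀| with hKdef
  have hKnn : 0 ≤ K := abs_nonneg _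
  have h2bound : ∀ y : ℝ, (∫ s in (0:ℝ)..y, f s) ≤ (y - M₀) * f y + K := by
    intro y
    have h1 := hGlb y
    have h2 : -K ≤ G x₀ := neg_abs_le _
    have h3 : G y = (y - M₀) * f y - ∫ s in (0:ℝ)..y, f s := rfl
    linarith
  -- conclude
  refine ⟨δ / 4, by linarith, 1 / 2, by norm_num, (C + K) / 2 + 1, by linarith, ?_⟩
  intro y
  have hq := h3 y
  have hfb := h2bound y
  linarith
end

section
/- Let f : ℝ → ℝ be twice continuously differentiable with liminf_{|s|→∞} f'(s) > 0 (i.e. there exist δ > 0 and R > 0 such that f'(s) ≥ δ whenever |s| ≥ R), and suppose there exist c_f > 0 and p ∈ [0,1] such that |f''(y)| ≤ c_f(1 + |y|^p) for all y ∈ ℝ. Let F(y) = ∫₀^y f(s) ds. Then for every ε > 0 there exists a constant c_ε > 0 such that |f(y)| ≤ ε F(y) + c_ε for all y ∈ ℝ. -/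
open Set

lemma int_poly (a b A B C : ℝ) :
    (∫ t in a..b, (A + B*t + C*t^2)) = A*(b-a) + B*(b^2-a^2)/2 + C*(b^3-a^3)/3 := by
  have i1 : IntervalIntegrable (fun t : ℝ => A + B*t) MeasureTheory.volume a b :=
    (continuous_const.add (continuous_const.mul continuous_id)).intervalIntegrable _ _
  have i2 : IntervalIntegrable (fun t : ℝ => C*t^2) MeasureTheory.volume a b :=
    (continuous_const.mul (continuous_pow 2)).intervalIntegrable _ _
  have i3 : IntervalIntegrable (fun t : ℝ => B*t) MeasureTheory.volume a b :=
    (continuous_const.mul continuous_id).intervalIntegrable _ _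
  rw [intervalIntegral.integral_add i1 i2, intervalIntegral.integral_add intervalIntegrable_const i3,
    intervalIntegral.integral_const_mul, intervalIntegral.integral_const_mul,
    integral_id, integral_pow, intervalIntegral.integral_const]
  push_cast [smul_eq_mul]; ring

lemma deriv_bd (f : ℝ → ℝ) (hd1 : Differentiable ℝ (deriv f))
    (hc2 : Continuous (deriv (deriv f))) (a Y M : ℝ)
    (hM : ∀ u ∈ Icc a Y, |deriv (deriv f) u| ≤ M) :
    ∀ t ∈ Icc a Y, deriv f Y - M*(Y-t) ≤ deriv f t ∧ deriv f t ≤ deriv f Y + M*(Y-t) := by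
  intro t ht
  have hsub : (∫ u in t..Y, deriv (deriv f) u) = deriv f Y - deriv f t :=
    intervalIntegral.integral_deriv_eq_sub (fun x _ => hd1 x) (hc2.intervalIntegrable _ _)
  have hb : |deriv f Y - deriv f t| ≤ M * (Y - t) := by
    rw [← hsub]
    have := intervalIntegral.norm_integral_le_of_norm_le_const (a := t) (b := Y) (C := M)
      (f := deriv (deriv f)) (fun x hx => by
        have hx' : x ∈ Icc a Y := by
          rcases ht with ⟨h1, h2⟩
          rw [Set.uIoc_of_le h2] at hx
          exact ⟨le_trans h1 (le_of_lt hx.1), hx.2⟩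
        simpa using hM x hx')
    rw [abs_of_nonneg (by linarith [ht.2] : (0:ℝ) ≤ Y - t)] at this
    simpa [abs_sub_comm] using this
  have := abs_le.mp hb
  constructor <;> linarith [this.1, this.2]

lemma window (f : ℝ → ℝ) (hd : Differentiable ℝ f) (hc1 : Continuous (deriv f))
    (hd1 : Differentiable ℝ (deriv f)) (hc2 : Continuous (deriv (deriv f)))
    (a Y M : ℝ) (haY : a ≤ Y) (hM : ∀ u ∈ Icc a Y, |deriv (deriv f) u| ≤ M) :
    (Y-a)/2 * f Y + (Y-a)/2 * f a - (5/12)*M*(Y-a)^3 ≤ ∫ s in a..Y, f s := by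
  set D := deriv f Y with hDdef
  have hw : 0 ≤ Y - a := by linarith
  have hdb := deriv_bd f hd1 hc2 a Y M hM
  -- step C : pointwise lower bound for f on [a,Y]
  have hC : ∀ s ∈ Icc a Y, f Y - (D * (Y-s) + M*(Y-s)^2/2) ≤ f s := by
    intro s hs
    have hsub : (∫ t in s..Y, deriv f t) = f Y - f s :=
      intervalIntegral.integral_deriv_eq_sub (fun x _ => hd x) (hc1.intervalIntegrable _ _)
    have hmono : (∫ t in s..Y, deriv f t) ≤ ∫ t in s..Y, ((D + M*Y) + (-M)*t + 0*t^2) := by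
      apply intervalIntegral.integral_mono_on hs.2 (hc1.intervalIntegrable _ _)
        (((continuous_const.add (continuous_const.mul continuous_id)).add
          (continuous_const.mul (continuous_pow 2))).intervalIntegrable _ _)
      intro t ht
      have := (hdb t ⟨le_trans hs.1 ht.1, ht.2⟩).2
      simp only [Pi.add_apply, Pi.mul_apply, id_eq]; nlinarith [this]
    rw [int_poly, hsub] at hmono
    nlinarith [hmono]
  -- step D : integrate the lower bound
  have hD : (Y-a) * f Y - D * ((Y-a)^2/2) - M * ((Y-a)^3/6) ≤ ∫ s in a..Y, f s := by
    have hmono : (∫ s in a..Y, ((f Y - D*Y - M*Y^2/2) + (D + M*Y)*s + (-M/2)*s^2))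
        ≤ ∫ s in a..Y, f s := by
      apply intervalIntegral.integral_mono_on haY
        (((continuous_const.add (continuous_const.mul continuous_id)).add
          (continuous_const.mul (continuous_pow 2))).intervalIntegrable _ _)
        (hd.continuous.intervalIntegrable _ _)
      intro s hs
      have := hC s hs
      simp only [Pi.add_apply, Pi.mul_apply, id_eq]; nlinarith [this]
    rw [int_poly] at hmono
    nlinarith [hmono]
  -- step E : bound D*(Y-a) from above
  have hE : D * (Y-a) - M * ((Y-a)^2/2) ≤ f Y - f a := by
    have hsub : (∫ t in a..Y, deriv f t) = f Y - f a :=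
      intervalIntegral.integral_deriv_eq_sub (fun x _ => hd x) (hc1.intervalIntegrable _ _)
    have hmono : (∫ t in a..Y, ((D - M*Y) + M*t + 0*t^2)) ≤ ∫ t in a..Y, deriv f t := by
      apply intervalIntegral.integral_mono_on haY
        (((continuous_const.add (continuous_const.mul continuous_id)).add
          (continuous_const.mul (continuous_pow 2))).intervalIntegrable _ _)
        (hc1.intervalIntegrable _ _)
      intro t ht
      have := (hdb t ht).1
      simp only [Pi.add_apply, Pi.mul_apply, id_eq]; nlinarith [this]
    rw [int_poly, hsub] at hmono
    nlinarith [hmono]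
  have hE2 : D * ((Y-a)^2/2) ≤ ((Y-a)/2) * (f Y - f a) + M * ((Y-a)^3/4) := by
    have := mul_le_mul_of_nonneg_left hE (by linarith : (0:ℝ) ≤ (Y-a)/2)
    nlinarith [this]
  nlinarith [hD, hE2]

section helpers
variable (f : ℝ → ℝ)

-- one-sided main lemma
set_option maxHeartbeats 1000000 in
lemma aux_onesided (hf : ContDiff ℝ 2 f)
    (hdiss : ∃ δ > (0:ℝ), ∃ R > (0:ℝ), ∀ s : ℝ, R ≤ |s| → δ ≤ deriv f s)
    (c_f p : ℝ) (hcf : 0 < c_f) (hp0 : 0 ≤ p) (hp1 : p ≤ 1)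
    (hgrowth : ∀ y : ℝ, |deriv (deriv f) y| ≤ c_f * (1 + |y| ^ p))
    (ε : ℝ) (hε : 0 < ε) :
    ∃ c > (0:ℝ), ∀ y : ℝ, f y ≤ ε * (∫ s in (0:ℝ)..y, f s) + c := by
  obtain ⟨δ, hδ, R, hR, hds⟩ := hdiss
  have hd : Differentiable ℝ f := hf.differentiable two_ne_zero
  have hc : Continuous f := hd.continuous
  have hf1 : ContDiff ℝ 1 (deriv f) :=
    ((contDiff_succ_iff_deriv (n := 1)).mp (by exact_mod_cast hf)).2.2
  have hd1 : Differentiable ℝ (deriv f) := hf1.differentiable one_ne_zero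
  have hc1 : Continuous (deriv f) := hd1.continuous
  have hc2 : Continuous (deriv (deriv f)) := hf1.continuous_deriv le_rfl
  set F : ℝ → ℝ := fun y => ∫ s in (0:ℝ)..y, f s with hF
  -- monotonicity with slope δ away from [-R,R]
  have key_mono : ∀ x y : ℝ, x ≤ y → (∀ t ∈ Icc x y, R ≤ |t|) →
      f x + δ * (y - x) ≤ f y := by
    intro x y hxy habs
    have hsub : (∫ t in x..y, deriv f t) = f y - f x :=
      intervalIntegral.integral_deriv_eq_sub (fun u _ => hd u) (hc1.intervalIntegrable _ _)
    have hmono : (∫ _t in x..y, δ) ≤ ∫ t in x..y, deriv f t := by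
      apply intervalIntegral.integral_mono_on hxy intervalIntegrable_const
        (hc1.intervalIntegrable _ _)
      intro t ht; exact hds t (habs t ht)
    rw [hsub, intervalIntegral.integral_const, smul_eq_mul] at hmono
    linarith
  -- second derivative bound in linear form
  have fppM : ∀ Y : ℝ, 1 ≤ Y → ∀ u : ℝ, |u| ≤ Y → |deriv (deriv f) u| ≤ c_f * (1 + Y) := by
    intro Y hY u hu
    refine le_trans (hgrowth u) ?_
    have h1 : |u| ^ p ≤ Y := by
      rcases le_total (|u|) 1 with h | h
      · exact le_trans (Real.rpow_le_one (abs_nonneg u) h hp0) hY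
      · calc |u| ^ p ≤ |u| ^ (1:ℝ) := Real.rpow_le_rpow_of_exponent_le h hp1
          _ = |u| := Real.rpow_one _
          _ ≤ Y := hu
    nlinarith
  -- bound of f on [-R, R]
  obtain ⟨B, hB⟩ := (isCompact_Icc (a := -R) (b := R)).exists_bound_of_continuousOn
    hc.continuousOn
  have hB0 : 0 ≤ B := le_trans (norm_nonneg _) (hB R ⟨by linarith, le_rfl⟩)
  have hBabs : ∀ x : ℝ, |x| ≤ R → |f x| ≤ B := by
    intro x hx
    have := abs_le.mp hx
    simpa using hB x ⟨this.1, this.2⟩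
  -- |F| small in the middle
  have Fmid : ∀ y : ℝ, |y| ≤ R → |F y| ≤ B * R := by
    intro y hy
    have h := intervalIntegral.norm_integral_le_of_norm_le_const (a := (0:ℝ)) (b := y)
      (C := B) (f := f) (fun x hx => by
        have hx' : x ∈ Set.uIcc (0:ℝ) y := Set.Ioc_subset_Icc_self hx
        rw [Set.uIcc_eq_union] at hx'
        have : |x| ≤ |y| := by
          rcases hx' with h' | h'
          · rw [abs_of_nonneg h'.1]; exact le_trans h'.2 (le_abs_self y)
          · rw [abs_of_nonpos h'.2]; exact le_trans (neg_le_neg h'.1) (neg_le_abs y)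
        simpa using hBabs x (le_trans this hy))
    simp only [sub_zero] at h
    calc |F y| ≤ B * |y| := by simpa using h
      _ ≤ B * R := by nlinarith
  -- quadratic growth of F on the right
  have FposLB : ∀ y : ℝ, R ≤ y → F R + f R * (y - R) + δ * (y - R)^2/2 ≤ F y := by
    intro y hy
    have hsplit : F R + (∫ s in R..y, f s) = F y :=
      intervalIntegral.integral_add_adjacent_intervals (hc.intervalIntegrable _ _)
        (hc.intervalIntegrable _ _)
    have hmono : (∫ s in R..y, ((f R - δ*R) + δ*s + 0*s^2)) ≤ ∫ s in R..y, f s := by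
      apply intervalIntegral.integral_mono_on hy
        (((continuous_const.add (continuous_const.mul continuous_id)).add
          (continuous_const.mul (continuous_pow 2))).intervalIntegrable _ _)
        (hc.intervalIntegrable _ _)
      intro s hs
      have := key_mono R s hs.1 (fun t ht => by
        rw [abs_of_nonneg (by linarith [ht.1] : (0:ℝ) ≤ t)]; exact ht.1)
      simp only [Pi.add_apply, Pi.mul_apply, id_eq]; nlinarith
    rw [int_poly] at hmono
    nlinarith [hmono]
  -- quadratic growth of F on the left
  have FnegLB : ∀ y : ℝ, y ≤ -R →
      F (-R) - f (-R) * (-R - y) + δ * (-R - y)^2/2 ≤ F y := by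
    intro y hy
    have hsplit : F y + (∫ s in y..(-R), f s) = F (-R) :=
      intervalIntegral.integral_add_adjacent_intervals (hc.intervalIntegrable _ _)
        (hc.intervalIntegrable _ _)
    have hmono : (∫ s in y..(-R), f s) ≤ ∫ s in y..(-R), ((f (-R) + δ*R) + δ*s + 0*s^2) := by
      apply intervalIntegral.integral_mono_on hy (hc.intervalIntegrable _ _)
        (((continuous_const.add (continuous_const.mul continuous_id)).add
          (continuous_const.mul (continuous_pow 2))).intervalIntegrable _ _)
      intro s hs
      have := key_mono s (-R) hs.2 (fun t ht => by
        rw [abs_of_nonpos (by linarith [ht.2] : t ≤ (0:ℝ))]; linarith [ht.2])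
      simp only [Pi.add_apply, Pi.mul_apply, id_eq]; nlinarith
    rw [int_poly] at hmono
    nlinarith [hmono]
  -- global lower bound for F
  have FLBex : ∃ C₀ : ℝ, 0 ≤ C₀ ∧ ∀ y : ℝ, -C₀ ≤ F y := by
    refine ⟨B*R + B^2/(2*δ), by positivity, ?_⟩
    intro y
    rcases le_total y (-R) with hy | hy
    · have h := FnegLB y hy
      have hfR : |f (-R)| ≤ B := hBabs (-R) (by rw [abs_neg, abs_of_nonneg hR.le])
      have hFR : |F (-R)| ≤ B*R := Fmid (-R) (by rw [abs_neg, abs_of_nonneg hR.le])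
      have h1 := abs_le.mp hfR
      have h2 := abs_le.mp hFR
      have hq : (0:ℝ) ≤ -R - y := by linarith
      have key : -(B^2/(2*δ)) ≤ - f (-R) * (-R - y) + δ * (-R - y)^2/2 := by
        have hkey : f (-R) * (-R - y) - δ * (-R - y)^2/2 ≤ B^2/(2*δ) := by
          rw [le_div_iff₀ (by linarith : (0:ℝ) < 2*δ)]
          nlinarith [sq_nonneg (δ*(-R-y) - B),
            mul_le_mul_of_nonneg_right h1.2 hq, hδ, sq_nonneg (-R-y)]
        linarith
      linarith [h, h2.1, key]
    rcases le_total R y with hy' | hy'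
    · have h := FposLB y hy'
      have hfR : |f R| ≤ B := hBabs R (by rw [abs_of_nonneg hR.le])
      have hFR : |F R| ≤ B*R := Fmid R (by rw [abs_of_nonneg hR.le])
      have h1 := abs_le.mp hfR
      have h2 := abs_le.mp hFR
      have hq : (0:ℝ) ≤ y - R := by linarith
      have key : -(B^2/(2*δ)) ≤ f R * (y - R) + δ * (y - R)^2/2 := by
        have hkey : -(f R * (y - R) + δ * (y - R)^2/2) ≤ B^2/(2*δ) := by
          rw [le_div_iff₀ (by linarith : (0:ℝ) < 2*δ)]
          nlinarith [sq_nonneg (δ*(y-R) - B),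
            mul_le_mul_of_nonneg_right (by linarith [h1.1] : -f R ≤ B) hq, hδ]
        linarith
      linarith [h, h2.1, key]
    · have h3 : |F y| ≤ B*R := Fmid y (abs_le.mpr ⟨by linarith, hy'⟩)
      have h4 := (abs_le.mp h3).1
      have hC : 0 ≤ B^2/(2*δ) := by positivity
      linarith [h4, hC]
  obtain ⟨C₀, hC₀, FLB⟩ := FLBex
  -- main pointwise estimate for large Y
  set w : ℝ := 4/ε with hwdef
  have hw : 0 < w := by positivity
  set K : ℝ := (5/6)*c_f*w^2 with hKdef
  have hK : 0 < K := by positivity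
  set Q : ℝ := (4*(K + (ε/2)*B))/(ε*δ) with hQdef
  have hQ0 : 0 ≤ Q := by positivity
  set Y₀ : ℝ := max (max (R + w) 1) (R + Q) with hY₀def
  have hY₀1 : 1 ≤ Y₀ := le_trans (le_max_right _ _) (le_max_left _ _)
  have hbig : ∀ Y : ℝ, Y₀ ≤ Y →
      f Y ≤ ε * F Y + ((ε/2)*B*R + (ε/2)*C₀ + B + K*(1+R)) := by
    intro Y hY
    have hY1 : 1 ≤ Y := le_trans hY₀1 hY
    have hYRw : R + w ≤ Y := le_trans (le_trans (le_max_left _ _) (le_max_left _ _)) hY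
    have hYQ : R + Q ≤ Y := le_trans (le_max_right _ _) hY
    set a : ℝ := Y - w with hadef
    have haR : R ≤ a := by simp only [hadef]; linarith
    set M : ℝ := c_f * (1 + Y) with hMdef
    have hM : ∀ u ∈ Icc a Y, |deriv (deriv f) u| ≤ M := by
      intro u hu
      apply fppM Y hY1 u
      rw [abs_of_nonneg (by linarith [hu.1, hR] : (0:ℝ) ≤ u)]
      exact hu.2
    have hwin := window f hd hc1 hd1 hc2 a Y M (by linarith) hM
    have hwa : Y - a = w := by simp [hadef]
    rw [hwa] at hwin
    -- f a ≥ -B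
    have hfa : -B ≤ f a := by
      have h1 := key_mono R a haR (fun t ht => by
        rw [abs_of_nonneg (by linarith [ht.1] : (0:ℝ) ≤ t)]; exact ht.1)
      have h2 := (abs_le.mp (hBabs R (by rw [abs_of_nonneg hR.le]))).1
      nlinarith
    -- split F
    have hsplit : F a + (∫ s in a..Y, f s) = F Y :=
      intervalIntegral.integral_add_adjacent_intervals (hc.intervalIntegrable _ _)
        (hc.intervalIntegrable _ _)
    have hFa : -C₀ ≤ F a := FLB a
    -- main inequality: (w/2) f Y ≤ F Y + C₀ + (w/2)B + (5/12) M w³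
    have hmain : (w/2) * f Y ≤ F Y + C₀ + (w/2)*B + (5/12)*M*w^3 := by
      nlinarith [hwin, hsplit, hFa, hfa, hw]
    -- multiply by 2/w = ε/2 : f Y ≤ (ε/2) F Y + (ε/2)C₀ + B + K(1+Y)
    have hmul : f Y ≤ (ε/2) * F Y + (ε/2)*C₀ + B + K*(1+Y) := by
      have hwne : w ≠ 0 := ne_of_gt hw
      have hKM : (ε/2) * ((5/12)*M*w^3) = K*(1+Y) := by
        rw [hKdef, hMdef, hwdef]; field_simp; ring
      calc f Y = (ε/2) * ((w/2) * f Y) := by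
            rw [hwdef]; field_simp; ring
        _ ≤ (ε/2) * (F Y + C₀ + (w/2)*B + (5/12)*M*w^3) :=
            mul_le_mul_of_nonneg_left hmain (by positivity)
        _ = (ε/2) * F Y + (ε/2)*C₀ + (ε/2)*((w/2)*B) + K*(1+Y) := by
            rw [← hKM]; ring
        _ ≤ (ε/2) * F Y + (ε/2)*C₀ + B + K*(1+Y) := by
            have : (ε/2)*((w/2)*B) = B := by rw [hwdef]; field_simp; ring
            rw [this]
    -- absorption of the linear term using quadratic growth
    set q : ℝ := Y - R with hqdef
    have hq0 : 0 ≤ q := by simp only [hqdef]; linarith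
    have hqQ : Q ≤ q := by simp only [hqdef]; linarith
    have hFq : -B*R - B*q + δ*q^2/2 ≤ F Y := by
      have h := FposLB Y (by linarith)
      have h1 := (abs_le.mp (hBabs R (by rw [abs_of_nonneg hR.le]))).1
      have h2 := (abs_le.mp (Fmid R (by rw [abs_of_nonneg hR.le]))).1
      nlinarith [h]
    have habsorb : (K + (ε/2)*B) * q ≤ (ε*δ/4) * q^2 := by
      have hQval : (ε*δ/4) * Q = K + (ε/2)*B := by
        rw [hQdef]; field_simp
      have h1 : (ε*δ/4) * Q ≤ (ε*δ/4) * q :=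
        mul_le_mul_of_nonneg_left hqQ (by positivity)
      rw [hQval] at h1
      nlinarith [h1, hq0]
    -- combine
    have hhalf : (ε/2) * F Y ≥ (ε/2) * (-B*R - B*q + δ*q^2/2) :=
      mul_le_mul_of_nonneg_left hFq (by positivity)
    have hYq : K*(1+Y) = K*(1+R) + K*q := by rw [hqdef]; ring
    nlinarith [hmul, hhalf, habsorb]
  -- small y bound
  obtain ⟨B₂, hB₂⟩ := (isCompact_Icc (a := -R) (b := Y₀)).exists_bound_of_continuousOn
    hc.continuousOn
  have hB₂0 : 0 ≤ B₂ := le_trans (norm_nonneg _)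
    (hB₂ Y₀ ⟨by linarith, le_rfl⟩)
  have hsmall : ∀ y : ℝ, y ≤ Y₀ → f y ≤ B₂ := by
    intro y hy
    rcases le_total (-R) y with h | h
    · have := hB₂ y ⟨h, hy⟩
      calc f y ≤ |f y| := le_abs_self _
        _ ≤ B₂ := by simpa using this
    · have h1 := key_mono y (-R) h (fun t ht => by
        rw [abs_of_nonpos (by linarith [ht.2] : t ≤ (0:ℝ))]; linarith [ht.2])
      have h2 : f (-R) ≤ B₂ := by
        have := hB₂ (-R) ⟨le_rfl, by linarith⟩
        calc f (-R) ≤ |f (-R)| := le_abs_self _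
          _ ≤ B₂ := by simpa using this
      nlinarith
  -- final constant
  refine ⟨1 + max ((ε/2)*B*R + (ε/2)*C₀ + B + K*(1+R)) (B₂ + ε*C₀), by positivity, ?_⟩
  intro y
  rcases le_total y Y₀ with hy | hy
  · have h1 := hsmall y hy
    have h2 := FLB y
    have h3 : B₂ + ε*C₀ ≤ max ((ε/2)*B*R + (ε/2)*C₀ + B + K*(1+R)) (B₂ + ε*C₀) :=
      le_max_right _ _
    nlinarith [h1, h2, h3]
  · have h1 := hbig y hy
    have h3 : (ε/2)*B*R + (ε/2)*C₀ + B + K*(1+R) ≤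
        max ((ε/2)*B*R + (ε/2)*C₀ + B + K*(1+R)) (B₂ + ε*C₀) := le_max_left _ _
    nlinarith [h1, h3]

end helpers

/-- Remark 2.1(3): under (H1)-(H3) with growth exponent `p ∈ [0,1]`, for every `ε > 0` there
is `c_ε > 0` with `|f(y)| ≤ ε F(y) + c_ε` for all `y`, where `F(y) = ∫₀^y f(s) ds`. -/
theorem remark_2_1_3 (f : ℝ → ℝ) (hf : ContDiff ℝ 2 f)
    (hdiss : ∃ δ > (0:ℝ), ∃ R > (0:ℝ), ∀ s : ℝ, R ≤ |s| → δ ≤ deriv f s)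
    (c_f p : ℝ) (hcf : 0 < c_f) (hp0 : 0 ≤ p) (hp1 : p ≤ 1)
    (hgrowth : ∀ y : ℝ, |deriv (deriv f) y| ≤ c_f * (1 + |y| ^ p)) :
    ∀ ε > (0:ℝ), ∃ c_ε > (0:ℝ), ∀ y : ℝ,
      |f y| ≤ ε * (∫ s in (0:ℝ)..y, f s) + c_ε := by
  intro ε hε
  obtain ⟨c₁, hc₁, H₁⟩ := aux_onesided f hf hdiss c_f p hcf hp0 hp1 hgrowth ε hε
  set g : ℝ → ℝ := fun y => -f (-y) with hg
  have hgc : ContDiff ℝ 2 g := (hf.comp contDiff_neg).neg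
  have hdg : deriv g = fun y => deriv f (-y) := by
    funext y
    have h1 : deriv g y = -deriv (fun z => f (-z)) y := deriv.neg
    rw [h1, deriv_comp_neg, neg_neg]
  have hdgg : ∀ y : ℝ, deriv (deriv g) y = -(deriv (deriv f) (-y)) := by
    intro y; rw [hdg]; exact deriv_comp_neg (deriv f) y
  have hdiss' : ∃ δ > (0:ℝ), ∃ R > (0:ℝ), ∀ s : ℝ, R ≤ |s| → δ ≤ deriv g s := by
    obtain ⟨δ, hδ, R, hR, hds⟩ := hdiss
    exact ⟨δ, hδ, R, hR, fun s hs => by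
      rw [hdg]; exact hds (-s) (by rwa [abs_neg])⟩
  have hgrowth' : ∀ y : ℝ, |deriv (deriv g) y| ≤ c_f * (1 + |y| ^ p) := by
    intro y; rw [hdgg, abs_neg]
    simpa [abs_neg] using hgrowth (-y)
  obtain ⟨c₂, hc₂, H₂⟩ := aux_onesided g hgc hdiss' c_f p hcf hp0 hp1 hgrowth' ε hε
  refine ⟨max c₁ c₂, lt_max_iff.mpr (Or.inl hc₁), ?_⟩
  intro y
  have h1 := H₁ y
  have h2 := H₂ (-y)
  have hGF : (∫ s in (0:ℝ)..(-y), g s) = ∫ s in (0:ℝ)..y, f s := by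
    calc (∫ s in (0:ℝ)..(-y), g s) = -(∫ s in (0:ℝ)..(-y), f (-s)) := by
          rw [hg]; exact intervalIntegral.integral_neg
      _ = -(∫ s in y..(0:ℝ), f s) := by rw [intervalIntegral.integral_comp_neg]; norm_num
      _ = ∫ s in (0:ℝ)..y, f s := by rw [intervalIntegral.integral_symm]; ring
  have hgy : g (-y) = -f y := by rw [hg]; simp
  rw [hgy, hGF] at h2
  have hl1 : c₁ ≤ max c₁ c₂ := le_max_left _ _
  have hl2 : c₂ ≤ max c₁ c₂ := le_max_right _ _
  exact abs_le.mpr ⟨by linarith, by linarith⟩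
end
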